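/- Dissipation inequality for the storage function V_i(x_i) = |x_i|: for every i ∈ {1,2}, every x_1, x_2 ∈ ℝ and every c_i ≥ 0, sign(x_i)·f_i(x_1, x_2) ≤ −25·g(|x_i|) + 25·h(|x_{3−i}|) + c_i². -/

import Mathlib

noncomputable section

/-- The constant `a = (4π²n + 3π²)/2`. -/
def a (n : ℕ) : ℝ := (4 * Real.pi ^ 2 * n + 3 * Real.pi ^ 2) / 2

/-- The function `g` from the example. -/
def g (n : ℕ) (r : ℝ) : ℝ :=
  if |r| ≤ a n then
    Real.tanh (2 * r) +
      ∑ i ∈ Finset.Icc 1 n,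
        Real.sign r * (1 + Real.sign r * Real.tanh (2 * (r - Real.sign r * (2 * Real.pi ^ 2 * i))))
  else
    Real.sign r * ((2 * n + 1) + (r - Real.sign r * a n) ^ 2)

/-- The function `h` from the example. -/
def h (n : ℕ) (r : ℝ) : ℝ :=
  Real.sin (r / (2 * Real.pi)) ^ 2 +
    ∑ i ∈ Finset.Icc 1 n,
      (Real.tanh (r - 2 * Real.pi ^ 2 * i) + 1) * Real.sin (r / (2 * Real.pi)) ^ 2

/-- The vector field of subsystem `i`: its own state comes first, the other
subsystem's state second; `c` stands for `‖uᵢ‖_∞ / (a + 1)`. -/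
def fvec (n : ℕ) (c : ℝ) (x y : ℝ) : ℝ :=
  -(25 + c) * g n x + 25 * h n y + c ^ 2

/-- tanh is monotone. -/
lemma tanh_mono_aux {x y : ℝ} (hxy : x ≤ y) : Real.tanh x ≤ Real.tanh y := by
  rw [Real.tanh_eq_sinh_div_cosh, Real.tanh_eq_sinh_div_cosh,
    div_le_div_iff₀ (Real.cosh_pos x) (Real.cosh_pos y)]
  have h1 : 0 ≤ Real.sinh (y - x) := Real.sinh_nonneg_iff.mpr (sub_nonneg.mpr hxy)
  rw [Real.sinh_sub] at h1
  linarith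

lemma tanh_nonneg_aux {x : ℝ} (hx : 0 ≤ x) : 0 ≤ Real.tanh x := by
  have := tanh_mono_aux hx
  rwa [Real.tanh_zero] at this

lemma neg_one_lt_tanh (x : ℝ) : -1 < Real.tanh x := by
  rw [Real.tanh_eq_sinh_div_cosh, lt_div_iff₀ (Real.cosh_pos x)]
  have h1 : Real.sinh x + Real.cosh x = Real.exp x := Real.sinh_add_cosh x
  have h2 : 0 < Real.exp x := Real.exp_pos x
  linarith

lemma a_pos (n : ℕ) : 0 < a n := by
  have := Real.pi_pos
  have : 0 < Real.pi ^ 2 := by positivity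
  unfold a
  have hn : (0:ℝ) ≤ (n:ℝ) := Nat.cast_nonneg n
  nlinarith

lemma g_odd (n : ℕ) (r : ℝ) : g n (-r) = - g n r := by
  unfold g
  rw [abs_neg, Real.sign_neg]
  split_ifs with hr
  · rw [neg_add, ← Finset.sum_neg_distrib]
    congr 1
    · rw [show (2:ℝ) * -r = -(2*r) by ring, Real.tanh_neg]
    · apply Finset.sum_congr rfl
      intro i _
      rw [show 2 * (-r - -Real.sign r * (2 * Real.pi ^ 2 * i))
          = -(2 * (r - Real.sign r * (2 * Real.pi ^ 2 * i))) by ring, Real.tanh_neg]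
      ring
  · ring

lemma g_zero (n : ℕ) : g n 0 = 0 := by
  unfold g
  rw [if_pos (by rw [abs_zero]; exact (a_pos n).le)]
  simp [Real.sign_zero]

lemma sign_mul_g (n : ℕ) (x : ℝ) : Real.sign x * g n x = g n |x| := by
  rcases lt_trichotomy x 0 with hx | hx | hx
  · rw [Real.sign_of_neg hx, abs_of_neg hx, g_odd]; ring
  · subst hx; simp [Real.sign_zero, g_zero]
  · rw [Real.sign_of_pos hx, abs_of_pos hx]; ring

lemma g_nonneg (n : ℕ) {r : ℝ} (hr : 0 ≤ r) : 0 ≤ g n r := by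
  rcases eq_or_lt_of_le hr with hr0 | hr0
  · rw [← hr0, g_zero]
  unfold g
  rw [Real.sign_of_pos hr0]
  split_ifs with hcase
  · have h1 : 0 ≤ Real.tanh (2 * r) := tanh_nonneg_aux (by linarith)
    have h2 : 0 ≤ ∑ i ∈ Finset.Icc 1 n,
        (1:ℝ) * (1 + (1:ℝ) * Real.tanh (2 * (r - (1:ℝ) * (2 * Real.pi ^ 2 * i)))) := by
      apply Finset.sum_nonneg
      intro i _
      have := neg_one_lt_tanh (2 * (r - (1:ℝ) * (2 * Real.pi ^ 2 * i)))
      nlinarith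
    linarith
  · have : (0:ℝ) ≤ (r - 1 * a n) ^ 2 := sq_nonneg _
    have hn : (0:ℝ) ≤ (n:ℝ) := Nat.cast_nonneg n
    nlinarith

lemma h_nonneg (n : ℕ) (r : ℝ) : 0 ≤ h n r := by
  unfold h
  have h1 : 0 ≤ Real.sin (r / (2 * Real.pi)) ^ 2 := sq_nonneg _
  have h2 : 0 ≤ ∑ i ∈ Finset.Icc 1 n,
      (Real.tanh (r - 2 * Real.pi ^ 2 * i) + 1) * Real.sin (r / (2 * Real.pi)) ^ 2 := by
    apply Finset.sum_nonneg
    intro i _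
    apply mul_nonneg _ (sq_nonneg _)
    have := neg_one_lt_tanh (r - 2 * Real.pi ^ 2 * i)
    linarith
  linarith

lemma h_le_abs (n : ℕ) (r : ℝ) : h n r ≤ h n |r| := by
  rcases le_or_gt 0 r with hr | hr
  · rw [abs_of_nonneg hr]
  · rw [abs_of_neg hr]
    unfold h
    have hsin : Real.sin (-r / (2 * Real.pi)) ^ 2 = Real.sin (r / (2 * Real.pi)) ^ 2 := by
      rw [show -r / (2 * Real.pi) = -(r / (2 * Real.pi)) by ring, Real.sin_neg, neg_pow]
      ring
    rw [hsin]
    apply add_le_add_right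
    apply Finset.sum_le_sum
    intro i _
    apply mul_le_mul_of_nonneg_right _ (sq_nonneg _)
    have : Real.tanh (r - 2 * Real.pi ^ 2 * i) ≤ Real.tanh (-r - 2 * Real.pi ^ 2 * i) :=
      tanh_mono_aux (by linarith)
    linarith

lemma sign_le_one (x : ℝ) : Real.sign x ≤ 1 := by
  rcases lt_trichotomy x 0 with hx | hx | hx
  · rw [Real.sign_of_neg hx]; norm_num
  · subst hx; rw [Real.sign_zero]; norm_num
  · rw [Real.sign_of_pos hx]

lemma key (n : ℕ) (c : ℝ) (hc : 0 ≤ c) (x y : ℝ) :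
    Real.sign x * fvec n c x y ≤ -25 * g n |x| + 25 * h n |y| + c ^ 2 := by
  unfold fvec
  have hsg : Real.sign x * g n x = g n |x| := sign_mul_g n x
  have hgn : 0 ≤ g n |x| := g_nonneg n (abs_nonneg x)
  have hhn : 0 ≤ h n y := h_nonneg n y
  have hhle : h n y ≤ h n |y| := h_le_abs n y
  have hsle : Real.sign x ≤ 1 := sign_le_one x
  have hterm2 : Real.sign x * (25 * h n y) ≤ 25 * h n |y| := by nlinarith
  have hterm3 : Real.sign x * c ^ 2 ≤ c ^ 2 := by nlinarith [sq_nonneg c]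
  have hterm1 : Real.sign x * (-(25 + c) * g n x) ≤ -25 * g n |x| := by
    have : Real.sign x * (-(25 + c) * g n x) = -(25 + c) * g n |x| := by
      rw [← hsg]; ring
    rw [this]; nlinarith
  calc Real.sign x * (-(25 + c) * g n x + 25 * h n y + c ^ 2)
      = Real.sign x * (-(25 + c) * g n x) + Real.sign x * (25 * h n y)
        + Real.sign x * c ^ 2 := by ring
    _ ≤ -25 * g n |x| + 25 * h n |y| + c ^ 2 := by linarith

/-- dissipation inequality for the storage functions `Vᵢ(xᵢ) = |xᵢ|`:
for each `i ∈ {1,2}`, `sign(xᵢ)·fᵢ(x₁,x₂) ≤ −25·g(|xᵢ|) + 25·h(|x₃₋ᵢ|) + cᵢ²`. -/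
theorem storage_dissipation (n : ℕ) (c₁ c₂ : ℝ) (hc₁ : 0 ≤ c₁) (hc₂ : 0 ≤ c₂)
    (x₁ x₂ : ℝ) :
    Real.sign x₁ * fvec n c₁ x₁ x₂ ≤ -25 * g n |x₁| + 25 * h n |x₂| + c₁ ^ 2 ∧
    Real.sign x₂ * fvec n c₂ x₂ x₁ ≤ -25 * g n |x₂| + 25 * h n |x₁| + c₂ ^ 2 := by
  exact ⟨key n c₁ hc₁ x₁ x₂, key n c₂ hc₂ x₂ x₁⟩

end
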